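/- (Convexity of the weakly optimal martingales, Proposition 1, part 1.) For every 0 ≤ j ≤ J the set M^{∘,j} is convex: if M and M' are martingales with M_0 = M'_0 = 0 that are both weakly optimal at j, and θ ∈ (0,1), then θM + (1−θ)M' is weakly optimal at j. Consequently M^∘ is convex. -/

import Mathlib

open MeasureTheory Finset

section Aux

variable {Ω : Type*} {mΩ : MeasurableSpace Ω} {μ : Measure Ω} [IsProbabilityMeasure μ]

/-- A finite pointwise supremum of integrable functions is integrable. -/
lemma integrable_finset_sup' {ι : Type*} (s : Finset ι) (hs : s.Nonempty)
    (f : ι → Ω → ℝ) (hf : ∀ i ∈ s, Integrable (f i) μ) :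
    Integrable (fun ω => s.sup' hs (fun i => f i ω)) μ := by
  induction hs using Finset.Nonempty.cons_induction with
  | singleton a => exact hf a (Finset.mem_singleton_self a)
  | cons a s ha hs ih =>
    simp only [Finset.sup'_cons hs]
    exact (hf a (by simp)).sup (ih fun i hi => hf i (Finset.mem_cons_of_mem hi))

lemma sup'_add_const {ι : Type*} (s : Finset ι) (hs : s.Nonempty)
    (f : ι → ℝ) (c : ℝ) :
    s.sup' hs (fun i => f i + c) = s.sup' hs f + c := by
  induction hs using Finset.Nonempty.cons_induction with
  | singleton a => rfl
  | cons a s ha hs ih => simp only [Finset.sup'_cons hs, ih, max_add_add_right]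

lemma sup'_Icc_succ_left {J j : ℕ} (h : j < J) (f : ℕ → ℝ) :
    (Finset.Icc j J).sup' (Finset.nonempty_Icc.mpr h.le) f
      = max (f j) ((Finset.Icc (j+1) J).sup' (Finset.nonempty_Icc.mpr h) f) := by
  apply le_antisymm
  · refine Finset.sup'_le _ _ fun r hr => ?_
    rcases eq_or_lt_of_le (Finset.mem_Icc.mp hr).1 with rfl | hlt
    · exact le_max_left _ _
    · exact le_max_of_le_right
        (Finset.le_sup' f (Finset.mem_Icc.mpr ⟨hlt, (Finset.mem_Icc.mp hr).2⟩))
  · refine max_le (Finset.le_sup' f (Finset.mem_Icc.mpr ⟨le_rfl, h.le⟩)) ?_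
    refine Finset.sup'_le _ _ fun r hr =>
      Finset.le_sup' f (Finset.mem_Icc.mpr ⟨?_, (Finset.mem_Icc.mp hr).2⟩)
    exact Nat.le_of_succ_le (Finset.mem_Icc.mp hr).1

/-- The Snell envelope is integrable and adapted. -/
lemma snell_int_adapted
    (J : ℕ) (ℱ : Filtration ℕ mΩ) (Z Y : ℕ → Ω → ℝ)
    (hZ_adapted : Adapted ℱ Z) (hZ_int : ∀ j, Integrable (Z j) μ)
    (hYJ : ∀ ω, Y J ω = Z J ω)
    (hY : ∀ j, j < J → ∀ ω, Y j ω = max (Z j ω) ((μ[Y (j + 1) | ℱ j]) ω))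
    (j : ℕ) (hj : j ≤ J) :
    Integrable (Y j) μ ∧ StronglyMeasurable[ℱ j] (Y j) := by
  rcases lt_or_eq_of_le hj with h | h
  · have heq : Y j = fun ω => max (Z j ω) ((μ[Y (j + 1) | ℱ j]) ω) := funext (hY j h)
    constructor
    · rw [heq]; exact (hZ_int j).sup integrable_condExp
    · rw [heq]
      exact @StronglyMeasurable.sup Ω ℝ _ _ (ℱ j) _ _ _ (hZ_adapted j).stronglyMeasurable stronglyMeasurable_condExp
  · have heq : Y j = Z j := by subst h; exact funext hYJ
    rw [heq]; exact ⟨hZ_int j, (hZ_adapted j).stronglyMeasurable⟩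

/-- Weak duality: for any martingale `N`, `Y j ≤ E[max_{j≤r≤J} (Z r - N r + N j) | ℱ j]` a.s. -/
lemma weak_duality
    (J : ℕ) (ℱ : Filtration ℕ mΩ) (Z Y : ℕ → Ω → ℝ)
    (hZ_adapted : Adapted ℱ Z) (hZ_int : ∀ j, Integrable (Z j) μ)
    (hYJ : ∀ ω, Y J ω = Z J ω)
    (hY : ∀ j, j < J → ∀ ω, Y j ω = max (Z j ω) ((μ[Y (j + 1) | ℱ j]) ω))
    (N : ℕ → Ω → ℝ) (hN : Martingale N ℱ μ)
    (j : ℕ) (hj : j ≤ J) :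
    Y j ≤ᵐ[μ] μ[fun ω => (Finset.Icc j J).sup' (Finset.nonempty_Icc.mpr hj)
        (fun r => Z r ω - N r ω + N j ω) | ℱ j] := by
  have hint : ∀ (k l : ℕ) (hk : k ≤ J),
      Integrable (fun ω => (Finset.Icc k J).sup' (Finset.nonempty_Icc.mpr hk)
        (fun r => Z r ω - N r ω + N l ω)) μ := by
    intro k l hk
    exact integrable_finset_sup' _ _ _
      (fun r _ => ((hZ_int r).sub (hN.integrable r)).add (hN.integrable l))
  rcases lt_or_eq_of_le hj with h | h
  · -- recursive case j < J
    have hj1 : j + 1 ≤ J := h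
    have ih := weak_duality J ℱ Z Y hZ_adapted hZ_int hYJ hY N hN (j + 1) hj1
    set g : Ω → ℝ := fun ω => (Finset.Icc j J).sup' (Finset.nonempty_Icc.mpr hj)
        (fun r => Z r ω - N r ω + N j ω) with hgdef
    set g' : Ω → ℝ := fun ω => (Finset.Icc (j+1) J).sup' (Finset.nonempty_Icc.mpr hj1)
        (fun r => Z r ω - N r ω + N (j+1) ω) with hg'def
    have hg_int : Integrable g μ := hint j j hj
    have hg'_int : Integrable g' μ := hint (j+1) (j+1) hj1
    -- key pointwise recursion
    have hrec : ∀ ω, g ω = max (Z j ω) (g' ω + (N j ω - N (j+1) ω)) := by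
      intro ω
      have h1 : g ω = max (Z j ω - N j ω + N j ω)
          ((Finset.Icc (j+1) J).sup' (Finset.nonempty_Icc.mpr hj1)
            (fun r => Z r ω - N r ω + N j ω)) :=
        sup'_Icc_succ_left h _
      have h2 : (Finset.Icc (j+1) J).sup' (Finset.nonempty_Icc.mpr hj1)
          (fun r => Z r ω - N r ω + N j ω) = g' ω + (N j ω - N (j+1) ω) := by
        have he : (fun r => Z r ω - N r ω + N j ω)
            = fun r => (Z r ω - N r ω + N (j+1) ω) + (N j ω - N (j+1) ω) := by
          funext r; ring
        rw [he, sup'_add_const]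
      rw [h1, h2]
      congr 1
      ring
    -- lower bounds on E[g | ℱ j]
    have hb1 : Z j ≤ᵐ[μ] μ[g | ℱ j] := by
      have hle : Z j ≤ᵐ[μ] g :=
        Filter.Eventually.of_forall fun ω => by rw [hrec ω]; exact le_max_left _ _
      have hmono := condExp_mono (m := ℱ j) (hZ_int j) hg_int hle
      rw [condExp_of_stronglyMeasurable (ℱ.le j) (hZ_adapted j).stronglyMeasurable (hZ_int j)] at hmono
      exact hmono
    have hb2 : μ[Y (j+1) | ℱ j] ≤ᵐ[μ] μ[g | ℱ j] := by
      have hY1 := (snell_int_adapted J ℱ Z Y hZ_adapted hZ_int hYJ hY (j+1) hj1).1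
      -- E[Y(j+1)|ℱ j] ≤ E[g'|ℱ j]
      have step1 : μ[Y (j+1) | ℱ j] ≤ᵐ[μ] μ[g' | ℱ j] := by
        have t1 : μ[Y (j+1) | ℱ j] ≤ᵐ[μ] μ[μ[g' | ℱ (j+1)] | ℱ j] :=
          condExp_mono hY1 integrable_condExp ih
        have t2 : μ[μ[g' | ℱ (j+1)] | ℱ j] =ᵐ[μ] μ[g' | ℱ j] :=
          condExp_condExp_of_le (ℱ.mono (Nat.le_succ j)) (ℱ.le (j+1))
        exact t1.trans t2.le
      -- E[g'|ℱ j] = E[g' + (N j - N (j+1))|ℱ j]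
      have step2 : μ[g' | ℱ j] =ᵐ[μ] μ[fun ω => g' ω + (N j ω - N (j+1) ω) | ℱ j] := by
        have hsum : μ[fun ω => g' ω + (N j ω - N (j+1) ω) | ℱ j]
            =ᵐ[μ] μ[g' | ℱ j] + μ[fun ω => N j ω - N (j+1) ω | ℱ j] :=
          condExp_add (m := ℱ j) hg'_int ((hN.integrable j).sub (hN.integrable (j+1)))
        have hdiff : μ[fun ω => N j ω - N (j+1) ω | ℱ j] =ᵐ[μ] 0 := by
          have h3 : μ[fun ω => N j ω - N (j+1) ω | ℱ j]
              =ᵐ[μ] μ[N j | ℱ j] - μ[N (j+1) | ℱ j] :=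
            condExp_sub (m := ℱ j) (hN.integrable j) (hN.integrable (j+1))
          have h4 : μ[N j | ℱ j] = N j :=
            condExp_of_stronglyMeasurable (ℱ.le j) (hN.stronglyAdapted j) (hN.integrable j)
          have h5 : μ[N (j+1) | ℱ j] =ᵐ[μ] N j := hN.condExp_ae_eq (Nat.le_succ j)
          refine h3.trans ?_
          filter_upwards [h5] with ω h5ω
          simp [h4, h5ω]
        filter_upwards [hsum, hdiff] with ω h1ω h2ω
        simp only [Pi.add_apply, Pi.zero_apply] at h1ω h2ω ⊢
        rw [h1ω, h2ω, add_zero]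
      -- g' + (N j - N(j+1)) ≤ g pointwise
      have step3 : μ[fun ω => g' ω + (N j ω - N (j+1) ω) | ℱ j] ≤ᵐ[μ] μ[g | ℱ j] := by
        refine condExp_mono (hg'_int.add ((hN.integrable j).sub (hN.integrable (j+1)))) hg_int ?_
        exact Filter.Eventually.of_forall fun ω => by rw [hrec ω]; exact le_max_right _ _
      exact step1.trans (step2.le.trans step3)
    filter_upwards [hb1, hb2] with ω h1ω h2ω
    rw [hY j h ω]
    exact max_le h1ω h2ω
  · -- base case j = J
    subst h
    have hfun : (fun ω => (Finset.Icc j j).sup' (Finset.nonempty_Icc.mpr hj)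
        (fun r => Z r ω - N r ω + N j ω)) = Z j := by
      funext ω
      simp only [Finset.Icc_self, Finset.sup'_singleton]
      ring
    rw [hfun, condExp_of_stronglyMeasurable (ℱ.le j) (hZ_adapted j).stronglyMeasurable (hZ_int j)]
    exact Filter.Eventually.of_forall fun ω => (hYJ ω).le
termination_by J - j
decreasing_by omega

end Aux

/-- **Convexity of the weakly optimal martingales (Proposition 1, part 1).**
For every `0 ≤ j ≤ J`: if `M` and `M'` are martingales with `M 0 = M' 0 = 0` that are both
weakly optimal at `j`, and `θ ∈ (0,1)`, then `θ•M + (1−θ)•M'` is weakly optimal at `j`.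
(Consequently the sets `M^{∘,j}` and `M^∘` are convex.) -/
theorem weakly_optimal_convex
    {Ω : Type*} {mΩ : MeasurableSpace Ω} {μ : Measure Ω} [IsProbabilityMeasure μ]
    (J : ℕ) (ℱ : Filtration ℕ mΩ)
    (Z Y : ℕ → Ω → ℝ)
    (hZ_adapted : Adapted ℱ Z)
    (hZ_int : ∀ j, Integrable (Z j) μ)
    (hYJ : ∀ ω, Y J ω = Z J ω)
    (hY : ∀ j, j < J → ∀ ω, Y j ω = max (Z j ω) ((μ[Y (j + 1) | ℱ j]) ω))
    (M M' : ℕ → Ω → ℝ)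
    (hM : Martingale M ℱ μ) (hM' : Martingale M' ℱ μ)
    (hM0 : ∀ ω, M 0 ω = 0) (hM'0 : ∀ ω, M' 0 ω = 0)
    (θ : ℝ) (hθ : θ ∈ Set.Ioo (0 : ℝ) 1)
    (j : ℕ) (hj : j ≤ J)
    (hopt : Y j =ᵐ[μ] μ[fun ω => (Finset.Icc j J).sup' (Finset.nonempty_Icc.mpr hj)
        (fun r => Z r ω - M r ω + M j ω) | ℱ j])
    (hopt' : Y j =ᵐ[μ] μ[fun ω => (Finset.Icc j J).sup' (Finset.nonempty_Icc.mpr hj)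
        (fun r => Z r ω - M' r ω + M' j ω) | ℱ j]) :
    Y j =ᵐ[μ] μ[fun ω => (Finset.Icc j J).sup' (Finset.nonempty_Icc.mpr hj)
        (fun r => Z r ω - (θ * M r ω + (1 - θ) * M' r ω)
          + (θ * M j ω + (1 - θ) * M' j ω)) | ℱ j] := by
  obtain ⟨hθ0, hθ1⟩ := hθ
  have hθ0' : (0:ℝ) ≤ θ := hθ0.le
  have hθ1' : (0:ℝ) ≤ 1 - θ := by linarith
  set N : ℕ → Ω → ℝ := fun n ω => θ * M n ω + (1 - θ) * M' n ω with hNdef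
  have hN : Martingale N ℱ μ := by
    have : N = θ • M + (1 - θ) • M' := by
      funext n ω; simp [hNdef, Pi.smul_apply, smul_eq_mul]
    rw [this]; exact (hM.smul θ).add (hM'.smul (1 - θ))
  set gM : Ω → ℝ := fun ω => (Finset.Icc j J).sup' (Finset.nonempty_Icc.mpr hj)
      (fun r => Z r ω - M r ω + M j ω) with hgM
  set gM' : Ω → ℝ := fun ω => (Finset.Icc j J).sup' (Finset.nonempty_Icc.mpr hj)
      (fun r => Z r ω - M' r ω + M' j ω) with hgM'
  set gN : Ω → ℝ := fun ω => (Finset.Icc j J).sup' (Finset.nonempty_Icc.mpr hj)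
      (fun r => Z r ω - N r ω + N j ω) with hgN
  have hgM_int : Integrable gM μ := integrable_finset_sup' _ _ _
    (fun r _ => ((hZ_int r).sub (hM.integrable r)).add (hM.integrable j))
  have hgM'_int : Integrable gM' μ := integrable_finset_sup' _ _ _
    (fun r _ => ((hZ_int r).sub (hM'.integrable r)).add (hM'.integrable j))
  have hgN_int : Integrable gN μ := integrable_finset_sup' _ _ _
    (fun r _ => ((hZ_int r).sub (hN.integrable r)).add (hN.integrable j))
  -- lower bound: weak duality
  have hlow : Y j ≤ᵐ[μ] μ[gN | ℱ j] :=
    weak_duality J ℱ Z Y hZ_adapted hZ_int hYJ hY N hN j hj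
  -- pointwise: gN ≤ θ * gM + (1 - θ) * gM'
  have hptwise : ∀ ω, gN ω ≤ θ * gM ω + (1 - θ) * gM' ω := by
    intro ω
    refine Finset.sup'_le _ _ fun r hr => ?_
    have h1 : Z r ω - M r ω + M j ω ≤ gM ω := Finset.le_sup' (fun r => Z r ω - M r ω + M j ω) hr
    have h2 : Z r ω - M' r ω + M' j ω ≤ gM' ω := Finset.le_sup' (fun r => Z r ω - M' r ω + M' j ω) hr
    have : Z r ω - N r ω + N j ω
        = θ * (Z r ω - M r ω + M j ω) + (1 - θ) * (Z r ω - M' r ω + M' j ω) := by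
      simp only [hNdef]; ring
    rw [this]
    exact add_le_add (mul_le_mul_of_nonneg_left h1 hθ0')
      (mul_le_mul_of_nonneg_left h2 hθ1')
  -- upper bound
  have hup : μ[gN | ℱ j] ≤ᵐ[μ] Y j := by
    have h1 : μ[gN | ℱ j] ≤ᵐ[μ] μ[fun ω => θ * gM ω + (1 - θ) * gM' ω | ℱ j] :=
      condExp_mono hgN_int ((hgM_int.const_mul θ).add (hgM'_int.const_mul (1 - θ)))
        (Filter.Eventually.of_forall hptwise)
    have h2 : μ[fun ω => θ * gM ω + (1 - θ) * gM' ω | ℱ j]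
        =ᵐ[μ] μ[fun ω => θ * gM ω | ℱ j] + μ[fun ω => (1 - θ) * gM' ω | ℱ j] :=
      condExp_add (m := ℱ j) (hgM_int.const_mul θ) (hgM'_int.const_mul (1 - θ))
    have h3 : μ[fun ω => θ * gM ω | ℱ j] =ᵐ[μ] θ • μ[gM | ℱ j] :=
      condExp_smul (m := ℱ j) θ gM
    have h4 : μ[fun ω => (1 - θ) * gM' ω | ℱ j] =ᵐ[μ] (1 - θ) • μ[gM' | ℱ j] :=
      condExp_smul (m := ℱ j) (1 - θ) gM'
    refine h1.trans ?_
    filter_upwards [h2, h3, h4, hopt, hopt'] with ω h2ω h3ω h4ω hoω hoω'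
    simp only [Pi.add_apply, Pi.smul_apply, smul_eq_mul] at h2ω h3ω h4ω
    rw [h2ω, h3ω, h4ω, ← hoω, ← hoω']
    linarith
  exact hlow.antisymm hup
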